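/- If the collection of affine subspaces {A_ℓ}_{ℓ=1}^n in R^D is affinely independent and x_j ∈ A_ℓ, then every optimal solution c of the ASSC problem for x_j is subspace-preserving: c_i = 0 for every data point x_i not lying in A_ℓ. -/

import Mathlib

open Module Submodule Finset

section aux
variable {W : Type*} [AddCommGroup W] [Module ℝ W] [FiniteDimensional ℝ W]

lemma auxFinrankSupLe (s t : Submodule ℝ W) :
    finrank ℝ ↥(s ⊔ t) ≤ finrank ℝ s + finrank ℝ t := by
  have := Submodule.finrank_sup_add_finrank_inf_eq s t
  omega

lemma auxFinrankFinsetSupLe {ι : Type*} [DecidableEq ι]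
    (p : ι → Submodule ℝ W) (s : Finset ι) :
    finrank ℝ ↥(s.sup p) ≤ ∑ i ∈ s, finrank ℝ (p i) := by
  induction s using Finset.induction with
  | empty => simp
  | @insert a s ha ih =>
      rw [Finset.sup_insert, Finset.sum_insert ha]
      exact le_trans (auxFinrankSupLe _ _) (by omega)

lemma auxKey {ι : Type*} [Fintype ι] [DecidableEq ι]
    (p : ι → Submodule ℝ W)
    (h : finrank ℝ ↥(⨆ i, p i) = ∑ i, finrank ℝ (p i))
    (u : ι → W) (hu : ∀ i, u i ∈ p i) (hsum : ∑ i, u i = 0) (k : ι) : u k = 0 := by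
  classical
  set q := (Finset.univ.erase k).sup p with hq
  have hsup : (⨆ i, p i) = p k ⊔ q := by
    rw [← Finset.sup_univ_eq_iSup, ← Finset.insert_erase (Finset.mem_univ k),
      Finset.sup_insert]
  have h1 : finrank ℝ ↥(p k ⊔ q) + finrank ℝ ↥(p k ⊓ q) =
      finrank ℝ (p k) + finrank ℝ q := Submodule.finrank_sup_add_finrank_inf_eq _ _
  have h2 : finrank ℝ q ≤ ∑ i ∈ Finset.univ.erase k, finrank ℝ (p i) :=
    auxFinrankFinsetSupLe p _
  have h3 : finrank ℝ (p k) + ∑ i ∈ Finset.univ.erase k, finrank ℝ (p i) =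
      ∑ i, finrank ℝ (p i) := Finset.add_sum_erase _ (fun i => finrank ℝ (p i)) (Finset.mem_univ k)
  rw [hsup] at h
  have hinf : finrank ℝ ↥(p k ⊓ q) = 0 := by omega
  have hbot : p k ⊓ q = ⊥ := Submodule.finrank_eq_zero.mp hinf
  have hmem : u k ∈ p k ⊓ q := by
    refine ⟨hu k, ?_⟩
    have huk : u k = -∑ i ∈ Finset.univ.erase k, u i := by
      have := Finset.add_sum_erase Finset.univ u (Finset.mem_univ k)
      rw [hsum] at this
      linear_combination (norm := abel) this
    rw [huk]
    exact neg_mem (Submodule.sum_mem _ fun i hi =>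
      (Finset.le_sup hi : p i ≤ q) (hu i))
  rw [hbot] at hmem
  simpa using hmem
end aux

theorem stmt13 (D n N : ℕ) (A : Fin n → AffineSubspace ℝ (Fin D → ℝ))
    (hne : ∀ ℓ, (A ℓ : Set (Fin D → ℝ)).Nonempty)
    (hind : Module.finrank ℝ (affineSpan ℝ (⋃ ℓ, (A ℓ : Set (Fin D → ℝ)))).direction =
      (∑ ℓ, Module.finrank ℝ (A ℓ).direction) + (n - 1))
    (x : Fin N → (Fin D → ℝ)) (hX : ∀ i, ∃ κ, x i ∈ A κ)
    (j : Fin N) (ℓ : Fin n) (hj : x j ∈ A ℓ)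
    (hfeas0 : ∃ c0 : Fin N → ℝ, c0 j = 0 ∧ (∀ i, c0 i ≠ 0 → x i ∈ A ℓ) ∧
      (∑ i, c0 i = 1) ∧ x j = ∑ i, c0 i • x i)
    (c : Fin N → ℝ)
    (hfeas : c j = 0 ∧ (∑ i, c i = 1) ∧ x j = ∑ i, c i • x i)
    (hopt : ∀ c' : Fin N → ℝ,
      (c' j = 0 ∧ (∑ i, c' i = 1) ∧ x j = ∑ i, c' i • x i) →
      ∑ i, |c i| ≤ ∑ i, |c' i|) :
    ∀ i, x i ∉ A ℓ → c i = 0 := by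
  classical
  obtain ⟨hcj, hcsum, hcx⟩ := hfeas
  -- base points
  set p : Fin n → (Fin D → ℝ) := fun κ => if κ = ℓ then x j else (hne κ).choose with hpdef
  have hp : ∀ κ, p κ ∈ A κ := by
    intro κ
    by_cases h : κ = ℓ
    · subst h; simpa [hpdef] using hj
    · simpa [hpdef, h] using (hne κ).choose_spec
  have hpl : p ℓ = x j := by simp [hpdef]
  set d : Fin n → (Fin D → ℝ) := fun κ => p κ - x j with hddef
  set M : Fin n → Submodule ℝ (Fin D → ℝ) :=
    fun κ => (A κ).direction ⊔ (ℝ ∙ d κ) with hMdef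
  -- membership lemma
  have hmemM : ∀ κ, ∀ y ∈ A κ, y - x j ∈ M κ := by
    intro κ y hy
    have h1 : y - p κ ∈ (A κ).direction := by
      simpa using AffineSubspace.vsub_mem_direction hy (hp κ)
    have h2 : d κ ∈ (ℝ ∙ d κ) := Submodule.mem_span_singleton_self _
    have heq : y - x j = (y - p κ) + d κ := by simp [hddef]
    rw [heq]
    exact Submodule.add_mem _ (Submodule.mem_sup_left h1) (Submodule.mem_sup_right h2)
  -- Step 1: the direction of the affine span of the union is ⨆ M κ
  have hdir : (affineSpan ℝ (⋃ κ, (A κ : Set (Fin D → ℝ)))).direction = ⨆ κ, M κ := by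
    rw [direction_affineSpan]
    apply le_antisymm
    · rw [vectorSpan_def, Submodule.span_le]
      rintro v hv
      obtain ⟨a, ha, b, hb, rfl⟩ := Set.mem_vsub.mp hv
      obtain ⟨_, ⟨κa, rfl⟩, haκ⟩ := ha
      obtain ⟨_, ⟨κb, rfl⟩, hbκ⟩ := hb
      have : a -ᵥ b = (a - x j) - (b - x j) := by simp
      rw [this]
      exact SetLike.mem_coe.mpr (Submodule.sub_mem _
        ((le_iSup M κa) (hmemM κa a haκ)) ((le_iSup M κb) (hmemM κb b hbκ)))
    · apply iSup_le
      intro κ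
      apply sup_le
      · rw [AffineSubspace.direction_eq_vectorSpan]
        exact vectorSpan_mono ℝ (Set.subset_iUnion (fun κ => (A κ : Set (Fin D → ℝ))) κ)
      · rw [Submodule.span_le, Set.singleton_subset_iff]
        have : d κ = p κ -ᵥ x j := by simp [hddef]
        rw [this]
        exact vsub_set_subset_vectorSpan ℝ _
          (Set.vsub_mem_vsub (Set.mem_iUnion.mpr ⟨κ, hp κ⟩) (Set.mem_iUnion.mpr ⟨ℓ, hj⟩))
  -- Step 2: rank computations
  have hMle : ∀ κ, finrank ℝ (M κ) ≤
      finrank ℝ (A κ).direction + (if κ = ℓ then 0 else 1) := by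
    intro κ
    show finrank ℝ ↥((A κ).direction ⊔ (ℝ ∙ d κ)) ≤ _
    by_cases h : κ = ℓ
    · have hd0 : d ℓ = 0 := by simp [hddef, hpl]
      rw [h, hd0, Submodule.span_zero_singleton, sup_bot_eq]
      simp
    · have h1 := auxFinrankSupLe (A κ).direction (ℝ ∙ d κ)
      have h2 : finrank ℝ ↥(ℝ ∙ d κ) ≤ 1 := by
        by_cases hd : d κ = 0
        · rw [hd, Submodule.span_zero_singleton]
          simp
        · rw [finrank_span_singleton hd]
      simp only [h, if_false]
      omega
  have hite : ∑ κ : Fin n, (if κ = ℓ then 0 else 1) = n - 1 := by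
    have h1 : ∑ κ : Fin n, (if κ = ℓ then (1:ℕ) else 0) = 1 := by
      simp [Finset.sum_ite_eq']
    have h2 : ∑ κ : Fin n, ((if κ = ℓ then (0:ℕ) else 1) + (if κ = ℓ then 1 else 0)) = n := by
      have : ∀ κ : Fin n, (if κ = ℓ then (0:ℕ) else 1) + (if κ = ℓ then 1 else 0) = 1 := by
        intro κ; by_cases h : κ = ℓ <;> simp [h]
      simp [this]
    rw [Finset.sum_add_distrib, h1] at h2
    omega
  have hb : ∑ κ, (finrank ℝ (A κ).direction + (if κ = ℓ then 0 else 1)) =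
      (∑ κ, finrank ℝ (A κ).direction) + (n - 1) := by
    rw [Finset.sum_add_distrib, hite]
  have hsupr : finrank ℝ ↥(⨆ κ, M κ) = (∑ κ, finrank ℝ (A κ).direction) + (n - 1) := by
    rw [← hdir]; exact hind
  have hub : finrank ℝ ↥(⨆ κ, M κ) ≤ ∑ κ, finrank ℝ (M κ) := by
    rw [← Finset.sup_univ_eq_iSup]
    exact auxFinrankFinsetSupLe M Finset.univ
  have hMsum_le : ∑ κ, finrank ℝ (M κ) ≤ (∑ κ, finrank ℝ (A κ).direction) + (n - 1) := by
    rw [← hb]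
    exact Finset.sum_le_sum fun κ _ => hMle κ
  have hMsum : ∑ κ, finrank ℝ (M κ) = (∑ κ, finrank ℝ (A κ).direction) + (n - 1) := by
    omega
  have hrank : finrank ℝ ↥(⨆ κ, M κ) = ∑ κ, finrank ℝ (M κ) := by omega
  -- each M κ has rank exactly finrank Vκ + ite
  have hMeq : ∀ κ, finrank ℝ (M κ) =
      finrank ℝ (A κ).direction + (if κ = ℓ then 0 else 1) := by
    have := (Finset.sum_eq_sum_iff_of_le (fun κ _ => hMle κ)).mp (by rw [hb, hMsum])
    intro κ; exact (this κ (Finset.mem_univ κ))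
  -- Step 3: for κ ≠ ℓ, disjointness and d κ ≠ 0
  have hstep3 : ∀ κ, κ ≠ ℓ → ((A κ).direction ⊓ (ℝ ∙ d κ) = ⊥ ∧ d κ ≠ 0) := by
    intro κ hκ
    have heq : finrank ℝ ↥((A κ).direction ⊔ (ℝ ∙ d κ)) =
        finrank ℝ (A κ).direction + 1 := by
      have := hMeq κ
      simp only [hκ, if_false] at this
      exact this
    have hd : d κ ≠ 0 := by
      intro h0
      rw [h0, Submodule.span_zero_singleton, sup_bot_eq] at heq
      omega
    have hspan : finrank ℝ ↥(ℝ ∙ d κ) = 1 := finrank_span_singleton hd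
    have h1 := Submodule.finrank_sup_add_finrank_inf_eq (A κ).direction (ℝ ∙ d κ)
    rw [hspan] at h1
    have : finrank ℝ ↥((A κ).direction ⊓ (ℝ ∙ d κ)) = 0 := by
      omega
    exact ⟨Submodule.finrank_eq_zero.mp this, hd⟩
  -- Step 4: assign each index to a subspace
  set g : Fin N → Fin n := fun i => if x i ∈ A ℓ then ℓ else (hX i).choose with hgdef
  have hg : ∀ i, x i ∈ A (g i) := by
    intro i
    by_cases h : x i ∈ A ℓ
    · simpa [hgdef, h] using h
    · simpa [hgdef, h] using (hX i).choose_spec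
  have hgℓ : ∀ i, g i = ℓ ↔ x i ∈ A ℓ := by
    intro i
    constructor
    · intro h
      by_contra hx
      have := hg i
      rw [h] at this
      exact hx this
    · intro h; simp [hgdef, h]
  -- central zero sum
  have hzero : ∑ i, c i • (x i - x j) = 0 := by
    have : ∀ i, c i • (x i - x j) = c i • x i - c i • x j := fun i => smul_sub _ _ _
    simp_rw [this]
    rw [Finset.sum_sub_distrib, ← Finset.sum_smul, hcsum, one_smul, ← hcx, sub_self]
  set m : Fin n → (Fin D → ℝ) :=
    fun κ => ∑ i ∈ Finset.univ.filter (fun i => g i = κ), c i • (x i - x j) with hmdef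
  have hmsum : ∑ κ, m κ = 0 := by
    rw [hmdef]
    rw [Finset.sum_fiberwise Finset.univ g (fun i => c i • (x i - x j))]
    exact hzero
  have hmmem : ∀ κ, m κ ∈ M κ := by
    intro κ
    apply Submodule.sum_mem
    intro i hi
    have hgi : g i = κ := (Finset.mem_filter.mp hi).2
    exact Submodule.smul_mem _ _ (hmemM κ (x i) (hgi ▸ hg i))
  have hm0 : ∀ κ, m κ = 0 := auxKey M hrank m hmmem hmsum
  -- Step 5: fibers over κ ≠ ℓ have zero coefficient sum
  have hfiber : ∀ κ, κ ≠ ℓ → ∑ i ∈ Finset.univ.filter (fun i => g i = κ), c i = 0 := by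
    intro κ hκ
    obtain ⟨hdisj, hd0⟩ := hstep3 κ hκ
    have hsplit : m κ = (∑ i ∈ Finset.univ.filter (fun i => g i = κ), c i • (x i - p κ))
        + (∑ i ∈ Finset.univ.filter (fun i => g i = κ), c i) • d κ := by
      rw [hmdef, Finset.sum_smul]
      rw [← Finset.sum_add_distrib]
      apply Finset.sum_congr rfl
      intro i _
      rw [← smul_add]
      congr 1
      simp [hddef]
    have hu : (∑ i ∈ Finset.univ.filter (fun i => g i = κ), c i • (x i - p κ))
        ∈ (A κ).direction := by
      apply Submodule.sum_mem
      intro i hi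
      have hgi : g i = κ := (Finset.mem_filter.mp hi).2
      have : x i - p κ ∈ (A κ).direction := by
        simpa using AffineSubspace.vsub_mem_direction (hgi ▸ hg i) (hp κ)
      exact Submodule.smul_mem _ _ this
    have hzeroκ := hm0 κ
    rw [hsplit] at hzeroκ
    have hmem2 : (∑ i ∈ Finset.univ.filter (fun i => g i = κ), c i) • d κ ∈
        (A κ).direction ⊓ (ℝ ∙ d κ) := by
      constructor
      · have : (∑ i ∈ Finset.univ.filter (fun i => g i = κ), c i) • d κ =
            -(∑ i ∈ Finset.univ.filter (fun i => g i = κ), c i • (x i - p κ)) := by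
          linear_combination (norm := abel) hzeroκ
        rw [this]
        exact neg_mem hu
      · exact Submodule.smul_mem _ _ (Submodule.mem_span_singleton_self _)
    rw [hdisj] at hmem2
    have := (Submodule.mem_bot ℝ).mp hmem2
    rcases smul_eq_zero.mp this with h | h
    · exact h
    · exact absurd h hd0
  -- sum of c over indices outside A ℓ vanishes
  have hTsum : ∑ i ∈ Finset.univ.filter (fun i => ¬ x i ∈ A ℓ), c i = 0 := by
    have hfe : Finset.univ.filter (fun i => ¬ x i ∈ A ℓ) =
        Finset.univ.filter (fun i => g i ∈ Finset.univ.erase ℓ) := by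
      apply Finset.filter_congr
      intro i _
      simp only [Finset.mem_erase, Finset.mem_univ, and_true]
      exact not_congr (hgℓ i).symm
    rw [hfe, ← Finset.sum_fiberwise_eq_sum_filter]
    exact Finset.sum_eq_zero fun κ hκ => hfiber κ (Finset.mem_erase.mp hκ).1
  -- the ℓ-fiber statement: ∑_{x i ∈ A ℓ} c i • (x i - x j) = 0
  have hSzero : ∑ i ∈ Finset.univ.filter (fun i => x i ∈ A ℓ), c i • (x i - x j) = 0 := by
    have hfe : Finset.univ.filter (fun i => x i ∈ A ℓ) =
        Finset.univ.filter (fun i => g i = ℓ) := by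
      apply Finset.filter_congr
      intro i _
      simp [hgℓ i]
    rw [hfe]
    exact hm0 ℓ
  -- properties of the restricted coefficients
  have hSsum : ∑ i ∈ Finset.univ.filter (fun i => x i ∈ A ℓ), c i = 1 := by
    have := Finset.sum_filter_add_sum_filter_not Finset.univ (fun i => x i ∈ A ℓ) c
    rw [hTsum] at this
    rw [← hcsum]
    linarith [this]
  have hSx : ∑ i ∈ Finset.univ.filter (fun i => x i ∈ A ℓ), c i • x i = x j := by
    have h1 : ∑ i ∈ Finset.univ.filter (fun i => x i ∈ A ℓ), c i • (x i - x j) =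
        (∑ i ∈ Finset.univ.filter (fun i => x i ∈ A ℓ), c i • x i) -
        (∑ i ∈ Finset.univ.filter (fun i => x i ∈ A ℓ), c i) • x j := by
      rw [Finset.sum_smul, ← Finset.sum_sub_distrib]
      exact Finset.sum_congr rfl fun i _ => smul_sub _ _ _
    rw [hSzero, hSsum, one_smul] at h1
    linear_combination (norm := abel) -h1
  -- define restricted solution
  set c' : Fin N → ℝ := fun i => if x i ∈ A ℓ then c i else 0 with hc'def
  have hfeas' : c' j = 0 ∧ (∑ i, c' i = 1) ∧ x j = ∑ i, c' i • x i := by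
    refine ⟨by simp [hc'def, hj, hcj], ?_, ?_⟩
    · rw [hc'def]
      rw [Finset.sum_ite, Finset.sum_const_zero, add_zero]
      exact hSsum
    · rw [hc'def]
      have : ∀ i, (if x i ∈ A ℓ then c i else 0) • x i =
          (if x i ∈ A ℓ then c i • x i else 0) := by
        intro i; by_cases h : x i ∈ A ℓ <;> simp [h]
      simp_rw [this]
      rw [Finset.sum_ite, Finset.sum_const_zero, add_zero, hSx]
  have hoptc := hopt c' hfeas'
  have hc'abs : ∑ i, |c' i| = ∑ i ∈ Finset.univ.filter (fun i => x i ∈ A ℓ), |c i| := by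
    rw [hc'def]
    have : ∀ i, |(if x i ∈ A ℓ then c i else 0)| = (if x i ∈ A ℓ then |c i| else 0) := by
      intro i; by_cases h : x i ∈ A ℓ <;> simp [h]
    simp_rw [this]
    rw [Finset.sum_ite, Finset.sum_const_zero, add_zero]
  have hsplitabs := Finset.sum_filter_add_sum_filter_not Finset.univ
    (fun i => x i ∈ A ℓ) (fun i => |c i|)
  have hTabs : ∑ i ∈ Finset.univ.filter (fun i => ¬ x i ∈ A ℓ), |c i| ≤ 0 := by
    rw [hc'abs] at hoptc
    linarith [hsplitabs]
  intro i hi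
  have hiT : i ∈ Finset.univ.filter (fun i => ¬ x i ∈ A ℓ) := by
    simp [hi]
  have hall := (Finset.sum_eq_zero_iff_of_nonneg
    (fun i _ => abs_nonneg (c i))).mp
    (le_antisymm hTabs (Finset.sum_nonneg fun i _ => abs_nonneg (c i)))
  exact abs_eq_zero.mp (hall i hiT)
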